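/- Let u be the common image Kx̃ of all minimizers x̃ of ‖Kx-y‖² on B_R, and assume K*(y-u) ≠ 0. Set τ = ‖K*(y-u)‖_∞. Then for every minimizer x̃ and every index λ with x̃_λ ≠ 0, one has |(K*(y-u))_λ| = τ and sign(x̃_λ) = sign((K*(y-u))_λ). -/

import Mathlib

open scoped ENNReal NNReal

/-- The `ℓ¹`-ball of radius `R` inside `ℓ²(I)`. -/
noncomputable def l1Ball (I : Type*) (R : ℝ) : Set (lp (fun _ : I => ℝ) 2) :=
  {x | (∑' i, (‖x i‖₊ : ℝ≥0∞)) ≤ ENNReal.ofReal R}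

lemma l1Ball_convex (I : Type*) (R : ℝ) : Convex ℝ (l1Ball I R) := by
  intro x hx z hz a b ha hb hab
  have key : ∀ i, (‖(a • x + b • z : lp (fun _ : I => ℝ) 2) i‖₊ : ℝ≥0∞)
      ≤ (a.toNNReal : ℝ≥0∞) * ‖x i‖₊ + (b.toNNReal : ℝ≥0∞) * ‖z i‖₊ := by
    intro i
    have hcoe : (a • x + b • z : lp (fun _ : I => ℝ) 2) i = a * x i + b * z i := by
      simp [lp.coeFn_add, lp.coeFn_smul, Pi.add_apply, Pi.smul_apply, smul_eq_mul]
      rfl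
    rw [hcoe]
    calc (‖a * x i + b * z i‖₊ : ℝ≥0∞) ≤ (‖a * x i‖₊ : ℝ≥0∞) + ‖b * z i‖₊ := by
          exact_mod_cast nnnorm_add_le _ _
      _ = (a.toNNReal : ℝ≥0∞) * ‖x i‖₊ + (b.toNNReal : ℝ≥0∞) * ‖z i‖₊ := by
          have hA : ‖a‖₊ = a.toNNReal := by ext; simp [Real.coe_toNNReal _ ha, abs_of_nonneg ha]
          have hB : ‖b‖₊ = b.toNNReal := by ext; simp [Real.coe_toNNReal _ hb, abs_of_nonneg hb]
          rw [nnnorm_mul, nnnorm_mul, hA, hB]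
          push_cast; ring
  calc (∑' i, (‖(a • x + b • z : lp (fun _ : I => ℝ) 2) i‖₊ : ℝ≥0∞))
      ≤ ∑' i, ((a.toNNReal : ℝ≥0∞) * ‖x i‖₊ + (b.toNNReal : ℝ≥0∞) * ‖z i‖₊) :=
        ENNReal.tsum_le_tsum key
    _ = (a.toNNReal : ℝ≥0∞) * (∑' i, (‖x i‖₊ : ℝ≥0∞))
        + (b.toNNReal : ℝ≥0∞) * (∑' i, (‖z i‖₊ : ℝ≥0∞)) := by
        rw [ENNReal.tsum_add, ENNReal.tsum_mul_left, ENNReal.tsum_mul_left]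
    _ ≤ (a.toNNReal : ℝ≥0∞) * ENNReal.ofReal R + (b.toNNReal : ℝ≥0∞) * ENNReal.ofReal R := by
        gcongr
        · exact hx
        · exact hz
    _ = ENNReal.ofReal R := by
        rw [← add_mul]
        have : (a.toNNReal : ℝ≥0∞) + b.toNNReal = 1 := by
          rw [← ENNReal.coe_add, ← Real.toNNReal_add ha hb, hab]
          simp
        rw [this, one_mul]

theorem test {I : Type*} [Countable I] {H : Type*} [NormedAddCommGroup H]
    [InnerProductSpace ℝ H] [CompleteSpace H]
    (K : lp (fun _ : I => ℝ) 2 →L[ℝ] H) (y : H) (R : ℝ) (hR : 0 < R)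
    (u : H)
    (hu : ∀ xt ∈ l1Ball I R,
      (∀ w ∈ l1Ball I R, ‖K xt - y‖ ^ 2 ≤ ‖K w - y‖ ^ 2) → K xt = u)
    (xt : lp (fun _ : I => ℝ) 2) (hxt : xt ∈ l1Ball I R)
    (hmin : ∀ w ∈ l1Ball I R, ‖K xt - y‖ ^ 2 ≤ ‖K w - y‖ ^ 2) :
    ∀ v ∈ l1Ball I R,
      inner ℝ ((ContinuousLinearMap.adjoint K) (y - u)) v
        ≤ (inner ℝ ((ContinuousLinearMap.adjoint K) (y - u)) xt : ℝ) := by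
  intro v hv
  have hKxt : K xt = u := hu xt hxt hmin
  set S : Set H := K '' l1Ball I R with hS
  have hconv : Convex ℝ S := (l1Ball_convex I R).linear_image K.toLinearMap
  have hmem : u ∈ S := hKxt ▸ Set.mem_image_of_mem _ hxt
  have hle : ∀ w ∈ S, ‖y - u‖ ≤ ‖y - w‖ := by
    rintro w ⟨v', hv', rfl⟩
    have h2 := hmin v' hv'
    rw [hKxt] at h2
    have := (pow_le_pow_iff_left₀ (norm_nonneg _) (norm_nonneg _) (two_ne_zero)).mp h2
    rwa [norm_sub_rev u y, norm_sub_rev (K v') y] at this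
  haveI : Nonempty S := ⟨⟨u, hmem⟩⟩
  have hinf : ‖y - u‖ = ⨅ w : S, ‖y - w‖ := by
    refine le_antisymm (le_ciInf fun w => hle w w.2) ?_
    exact ciInf_le ⟨0, fun _ ⟨_, h⟩ => h ▸ norm_nonneg _⟩ (⟨u, hmem⟩ : S)
  have hvar := (norm_eq_iInf_iff_real_inner_le_zero hconv hmem).mp hinf
  have h3 : inner ℝ (y - u) (K v - K xt) ≤ (0 : ℝ) := by
    have := hvar (K v) (Set.mem_image_of_mem _ hv)
    rwa [hKxt]
  rw [← map_sub, ← ContinuousLinearMap.adjoint_inner_left] at h3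
  rw [inner_sub_right] at h3
  linarith

/-- Let `u` be the common image under `K` of all minimizers of `‖Kx-y‖²` on `B_R`, with
`K*(y-u) ≠ 0`, and `τ = ‖K*(y-u)‖_∞`. Then for every minimizer `xt` and every index `i` with
`xt i ≠ 0`, one has `|(K*(y-u)) i| = τ` and `sign (xt i) = sign ((K*(y-u)) i)`. -/
theorem stmt11 {I : Type*} [Countable I] {H : Type*} [NormedAddCommGroup H]
    [InnerProductSpace ℝ H] [CompleteSpace H]
    (K : lp (fun _ : I => ℝ) 2 →L[ℝ] H) (y : H) (R : ℝ) (hR : 0 < R)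
    (u : H)
    (hu : ∀ xt ∈ l1Ball I R,
      (∀ w ∈ l1Ball I R, ‖K xt - y‖ ^ 2 ≤ ‖K w - y‖ ^ 2) → K xt = u)
    (hex : ∃ xt ∈ l1Ball I R, ∀ w ∈ l1Ball I R, ‖K xt - y‖ ^ 2 ≤ ‖K w - y‖ ^ 2)
    (hne : (ContinuousLinearMap.adjoint K) (y - u) ≠ 0) :
    ∀ xt ∈ l1Ball I R,
      (∀ w ∈ l1Ball I R, ‖K xt - y‖ ^ 2 ≤ ‖K w - y‖ ^ 2) →
      ∀ i : I, xt i ≠ 0 →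
        |(ContinuousLinearMap.adjoint K) (y - u) i| =
            (⨆ j : I, |(ContinuousLinearMap.adjoint K) (y - u) j|) ∧
          Real.sign (xt i) = Real.sign ((ContinuousLinearMap.adjoint K) (y - u) i) := by
  classical
  intro xt hxt hmin i hi0
  haveI : Nonempty I := ⟨i⟩
  set g : lp (fun _ : I => ℝ) 2 := ContinuousLinearMap.adjoint K (y - u) with hgdef
  have key : ∀ v ∈ l1Ball I R, inner ℝ g v ≤ (inner ℝ g xt : ℝ) :=
    test K y R hR u hu xt hxt hmin
  set τ : ℝ := ⨆ j : I, |g j| with hτdef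
  set S : ℝ := inner ℝ g xt with hSdef
  have hbdd : BddAbove (Set.range fun j : I => |g j|) := by
    refine ⟨‖g‖, ?_⟩
    rintro _ ⟨j, rfl⟩
    simpa [Real.norm_eq_abs] using lp.norm_apply_le_norm two_ne_zero g j
  obtain ⟨j0, hj0⟩ : ∃ j, g j ≠ 0 := by
    by_contra h
    push_neg at h
    exact hne (lp.ext (funext fun j => by simpa using h j))
  have hτpos : 0 < τ := lt_of_lt_of_le (abs_pos.mpr hj0) (le_ciSup hbdd j0)
  -- lower bound
  have hlow : ∀ j : I, R * |g j| ≤ S := by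
    intro j
    have hsign : |Real.sign (g j)| ≤ 1 := by
      rcases lt_trichotomy (g j) 0 with h | h | h
      · rw [Real.sign_of_neg h]; norm_num
      · rw [h, Real.sign_zero]; norm_num
      · rw [Real.sign_of_pos h]; norm_num
    have hwmem : lp.single 2 j (R * Real.sign (g j)) ∈ l1Ball I R := by
      simp only [l1Ball, Set.mem_setOf_eq]
      rw [tsum_eq_single j (fun k hk => by
        rw [lp.single_apply_ne 2 j _ hk]; simp)]
      rw [lp.single_apply_self, ← enorm_eq_nnnorm, ← ofReal_norm]
      apply ENNReal.ofReal_le_ofReal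
      rw [Real.norm_eq_abs, abs_mul, abs_of_pos hR]
      nlinarith
    have hval : (inner ℝ g (lp.single 2 j (R * Real.sign (g j))) : ℝ) = R * |g j| := by
      rw [real_inner_comm, lp.inner_single_left]
      have : g j * Real.sign (g j) = |g j| := by
        rcases lt_trichotomy (g j) 0 with h | h | h
        · rw [Real.sign_of_neg h, abs_of_neg h]; ring
        · rw [h, Real.sign_zero, abs_zero]; ring
        · rw [Real.sign_of_pos h, abs_of_pos h]; ring
      simp only [RCLike.inner_apply', conj_trivial]
      rw [mul_comm (R * Real.sign (g j)) (g j), ← mul_assoc, mul_comm (g j) R, mul_assoc, this]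
    have := key _ hwmem
    rw [hval] at this
    exact this
  have hlowτ : R * τ ≤ S := by
    rw [mul_comm]
    rw [← le_div_iff₀ hR]
    refine ciSup_le fun j => ?_
    rw [le_div_iff₀ hR, mul_comm]
    exact hlow j
  -- summability
  have hsum1 : Summable fun k => g k * xt k := by
    exact (lp.summable_inner g xt).congr fun k => Real.inner_apply _ _
  have hsumnn : Summable fun k => ‖xt k‖ := by
    have hne' : (∑' k, (‖xt k‖₊ : ℝ≥0∞)) ≠ ⊤ := (lt_of_le_of_lt hxt ENNReal.ofReal_lt_top).ne
    exact NNReal.summable_coe.mpr (ENNReal.tsum_coe_ne_top_iff_summable.mp hne')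
  have hsum2 : Summable fun k => |xt k| := by simpa [Real.norm_eq_abs] using hsumnn
  have hsum3 : Summable fun k => τ * |xt k| := hsum2.mul_left τ
  have hxtR : (∑' k, |xt k|) ≤ R := by
    have h4 : ENNReal.ofReal (∑' k, |xt k|) = ∑' k, (‖xt k‖₊ : ℝ≥0∞) := by
      rw [ENNReal.ofReal_tsum_of_nonneg (fun k => abs_nonneg _) hsum2]
      congr 1
      funext k
      rw [← enorm_eq_nnnorm, ← ofReal_norm, Real.norm_eq_abs]
    have hxt' : (∑' k, (‖xt k‖₊ : ℝ≥0∞)) ≤ ENNReal.ofReal R := hxt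
    rw [← h4] at hxt'
    exact (ENNReal.ofReal_le_ofReal_iff hR.le).mp hxt'
  -- termwise bound
  have hterm : ∀ k, g k * xt k ≤ τ * |xt k| := by
    intro k
    calc g k * xt k ≤ |g k * xt k| := le_abs_self _
      _ = |g k| * |xt k| := abs_mul _ _
      _ ≤ τ * |xt k| := mul_le_mul_of_nonneg_right (le_ciSup hbdd k) (abs_nonneg _)
  -- upper bound
  have hSval : S = ∑' k, g k * xt k := by
    rw [hSdef, lp.inner_eq_tsum]
    simp [RCLike.inner_apply', conj_trivial]
    exact tsum_congr fun k => mul_comm _ _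
  have hupper : (∑' k, τ * |xt k|) ≤ R * τ := by
    rw [tsum_mul_left, mul_comm]
    exact mul_le_mul_of_nonneg_right hxtR hτpos.le
  have heqsum : (∑' k, g k * xt k) = ∑' k, τ * |xt k| := by
    have h1 : (∑' k, g k * xt k) ≤ ∑' k, τ * |xt k| := Summable.tsum_le_tsum hterm hsum1 hsum3
    have h2 : (∑' k, τ * |xt k|) ≤ ∑' k, g k * xt k := by
      calc (∑' k, τ * |xt k|) ≤ R * τ := hupper
        _ ≤ S := hlowτ
        _ = _ := hSval
    exact le_antisymm h1 h2
  -- pointwise equality at i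
  have heq : g i * xt i = τ * |xt i| := by
    set d : I → ℝ := fun k => τ * |xt k| - g k * xt k with hd
    have hdsum : Summable d := hsum3.sub hsum1
    have hdnn : ∀ k, 0 ≤ d k := fun k => sub_nonneg.mpr (hterm k)
    have hdtsum : (∑' k, d k) = 0 := by
      rw [hd]
      rw [Summable.tsum_sub hsum3 hsum1, heqsum, sub_self]
    have hle := Summable.le_tsum hdsum i (fun j _ => hdnn j)
    have : d i = 0 := le_antisymm (hdtsum ▸ hle) (hdnn i)
    have := sub_eq_zero.mp this
    linarith [this]
  have habs : 0 < |xt i| := abs_pos.mpr hi0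
  constructor
  · refine le_antisymm (le_ciSup hbdd i) ?_
    have h1 : g i * xt i ≤ |g i| * |xt i| := (le_abs_self _).trans_eq (abs_mul _ _)
    rw [heq] at h1
    exact le_of_mul_le_mul_right h1 habs
  · have hpos : 0 < g i * xt i := heq ▸ mul_pos hτpos habs
    rcases mul_pos_iff.mp hpos with ⟨hg, hx⟩ | ⟨hg, hx⟩
    · rw [Real.sign_of_pos hg, Real.sign_of_pos hx]
    · rw [Real.sign_of_neg hg, Real.sign_of_neg hx]
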